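/- The simple principal pivoting algorithm with Murty's least-index rule (identity permutation), started at the all-zeros vertex of the n-dimensional Morris orientation, reaches the global sink after exactly (n²+1)/2 iterations. -/

import Mathlib

/-- Flip coordinate `i` of a cube vertex. -/
def cflip {n : ℕ} (v : Fin n → Bool) (i : Fin n) : Fin n → Bool :=
  fun j => if j = i then !v j else v j

/-- `Φ v i = true` means the edge between `v` and `v ⊕ i` is incoming at `v` (sign `+`);
`Φ v i = false` means it is outgoing at `v` (sign `-`). Consistency says the two
endpoints of an edge agree about its direction. -/
def Consistent {n : ℕ} (Φ : (Fin n → Bool) → Fin n → Bool) : Prop :=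
  ∀ v i, Φ (cflip v i) i ≠ Φ v i

/-- `w` lies in the subcube spanned from `u` by the coordinate set `C`. -/
def InSubcube {n : ℕ} (u : Fin n → Bool) (C : Finset (Fin n)) (w : Fin n → Bool) : Prop :=
  ∀ j ∉ C, w j = u j

/-- Every (nonempty) subcube has a unique sink. -/
def HasUniqueSinks {n : ℕ} (Φ : (Fin n → Bool) → Fin n → Bool) : Prop :=
  ∀ (u : Fin n → Bool) (C : Finset (Fin n)),
    ∃! w, InSubcube u C w ∧ ∀ i ∈ C, Φ w i = true

/-- A unique-sink orientation of the `n`-cube. -/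
def IsUSO {n : ℕ} (Φ : (Fin n → Bool) → Fin n → Bool) : Prop :=
  Consistent Φ ∧ HasUniqueSinks Φ

/-- Directed edge relation of the orientation: `v → u`. -/
def Step {n : ℕ} (Φ : (Fin n → Bool) → Fin n → Bool) (v u : Fin n → Bool) : Prop :=
  ∃ i, Φ v i = false ∧ u = cflip v i

/-- Length of the run of `1`s at positions `j+1, j+2, …` (cyclically), i.e. the state
of the Morris transducer just before reading `v j` is `T` iff this run length is odd. -/
def morrisRun {n : ℕ} [NeZero n] (v : Fin n → Bool) (j : Fin n) : ℕ :=
  let K := (Finset.range n).filter (fun k : ℕ => v (j + 1 + (Fin.ofNat n k)) = false)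
  if h : K.Nonempty then K.min' h else 0

/-- The Morris orientation of the `n`-cube (`n` odd), given by the two-state transducer:
the all-ones vertex is the global sink; otherwise the edge at `v` in coordinate `j` is
outgoing (`false`) iff `v j` agrees with the parity of the run of ones above `j`. -/
def morris {n : ℕ} [NeZero n] (v : Fin n → Bool) : Fin n → Bool :=
  fun j =>
    if ∀ i, v i = true then true
    else !(v j == decide (Odd (morrisRun v j)))

/-- One step of simple principal pivoting with Murty's least-index rule:
flip the smallest coordinate with an outgoing edge (if any). -/
def murtyNext {n : ℕ} (Φ : (Fin n → Bool) → Fin n → Bool) (v : Fin n → Bool) :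
    Fin n → Bool :=
  let O := Finset.univ.filter (fun i => Φ v i = false)
  if h : O.Nonempty then cflip v (O.min' h) else v

open Fin.NatCast

/-- Murty's least-index rule (identity permutation), started at
the all-zeros vertex of the Morris orientation (`n` odd), reaches the global
sink (the all-ones vertex) after exactly `(n² + 1)/2` iterations: it is there
at time `(n² + 1)/2` and at no earlier time. -/
-- ## framework
lemma murtyNext_eq {n : ℕ} (Φ : (Fin n → Bool) → Fin n → Bool) (v : Fin n → Bool)
    (i0 : Fin n) (h0 : Φ v i0 = false) (hlt : ∀ i, i < i0 → Φ v i = true) :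
    murtyNext Φ v = cflip v i0 := by
  unfold murtyNext
  have hi0 : i0 ∈ Finset.univ.filter (fun i => Φ v i = false) := by simp [h0]
  have hne : (Finset.univ.filter (fun i => Φ v i = false)).Nonempty := ⟨i0, hi0⟩
  rw [dif_pos hne]
  have h1 := Finset.min'_le _ i0 hi0
  have h2 := Finset.min'_mem _ hne
  simp only [Finset.mem_filter] at h2
  rcases lt_or_eq_of_le h1 with h | h
  · have := hlt _ h
    rw [h2.2] at this
    exact absurd this (by simp)
  · rw [h]

lemma shift_cast {n : ℕ} [NeZero n] (x k : ℕ) :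
    ((x : Fin n) + 1 + (k : Fin n)) = ((x + 1 + k : ℕ) : Fin n) := by
  push_cast
  ring

lemma morrisRun_eq {n : ℕ} [NeZero n] (v : Fin n → Bool) (x r : ℕ) (hr : r < n)
    (h1 : ∀ k, k < r → v ((x + 1 + k : ℕ) : Fin n) = true)
    (h2 : v ((x + 1 + r : ℕ) : Fin n) = false) :
    morrisRun v (x : Fin n) = r := by
  unfold morrisRun
  have hrK : r ∈ (Finset.range n).filter
      (fun k : ℕ => v ((x : Fin n) + 1 + (k : Fin n)) = false) := by
    simp only [Finset.mem_filter, Finset.mem_range]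
    exact ⟨hr, by rw [shift_cast]; exact h2⟩
  have hne : ((Finset.range n).filter
      (fun k : ℕ => v ((x : Fin n) + 1 + (k : Fin n)) = false)).Nonempty := ⟨r, hrK⟩
  change (if h : ((Finset.range n).filter
      (fun k : ℕ => v ((x : Fin n) + 1 + (k : Fin n)) = false)).Nonempty then Finset.min' _ h else 0) = r
  rw [dif_pos hne]
  refine le_antisymm (Finset.min'_le _ _ hrK) ?_
  by_contra h
  push_neg at h
  have hm := Finset.min'_mem _ hne
  simp only [Finset.mem_filter, Finset.mem_range] at hm
  rw [shift_cast] at hm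
  rw [h1 _ h] at hm
  exact absurd hm.2 (by simp)

lemma morris_apply {n : ℕ} [NeZero n] (v : Fin n → Bool) (hne : ¬ ∀ i, v i = true)
    (j : Fin n) : morris v j = !(v j == decide (Odd (morrisRun v j))) := by
  simp [morris, hne]

lemma decide_odd (r : ℕ) : decide (Odd r) = decide (r % 2 = 1) :=
  decide_eq_decide.mpr Nat.odd_iff

lemma morris_true {n : ℕ} [NeZero n] (v : Fin n → Bool) (hne : ¬ ∀ i, v i = true)
    (j : Fin n) (r : ℕ) (hr : morrisRun v j = r)
    (h : v j ≠ decide (r % 2 = 1)) : morris v j = true := by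
  rw [morris_apply v hne, hr, decide_odd]
  revert h
  cases v j <;> cases decide (r % 2 = 1) <;> simp

lemma morris_false {n : ℕ} [NeZero n] (v : Fin n → Bool) (hne : ¬ ∀ i, v i = true)
    (j : Fin n) (r : ℕ) (hr : morrisRun v j = r)
    (h : v j = decide (r % 2 = 1)) : morris v j = false := by
  rw [morris_apply v hne, hr, decide_odd, h]
  cases decide (r % 2 = 1) <;> simp

-- ## trajectory vertices
def vb (m s x : ℕ) : Bool :=
  if 2*s ≤ m then decide ((x < m - 2*s ∧ x % 2 = (m+1) % 2) ∨ (m - 2*s ≤ x ∧ x ≤ m))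
  else decide ((x < 2*s - m ∧ x % 2 = m % 2) ∨ (2*s - m ≤ x ∧ x ≤ m))

def vtx (n m s : ℕ) : Fin n → Bool := fun j => vb m s j.val

lemma vb_A {m s x : ℕ} (h : 2*s ≤ m) :
    vb m s x = decide ((x < m - 2*s ∧ x % 2 = (m+1) % 2) ∨ (m - 2*s ≤ x ∧ x ≤ m)) :=
  if_pos h

lemma vb_B {m s x : ℕ} (h : ¬ 2*s ≤ m) :
    vb m s x = decide ((x < 2*s - m ∧ x % 2 = m % 2) ∨ (2*s - m ≤ x ∧ x ≤ m)) :=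
  if_neg h

lemma vtx_cast {n : ℕ} [NeZero n] (m s y : ℕ) (hy : y < n) :
    vtx n m s ((y : ℕ) : Fin n) = vb m s y := by
  simp [vtx, Fin.val_natCast, Nat.mod_eq_of_lt hy]

lemma vtx_cast_mod {n : ℕ} [NeZero n] (m s y : ℕ) :
    vtx n m s ((y : ℕ) : Fin n) = vb m s (y % n) := by
  simp [vtx, Fin.val_natCast]

lemma fin_eq_cast {n : ℕ} [NeZero n] (j : Fin n) : j = ((j.val : ℕ) : Fin n) :=
  (Fin.cast_val_eq_self j).symm

-- ## non-sink witnesses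
lemma not_all_mid {n m s : ℕ} [NeZero n] (hmn : m+1 < n) (hs : s ≤ m) :
    ¬ ∀ i, vtx n m s i = true := by
  intro h
  have hh := h ((m+1 : ℕ) : Fin n)
  rw [vtx_cast _ _ _ hmn] at hh
  revert hh
  unfold vb
  split <;> (rw [decide_eq_true_eq]; omega)

lemma not_all_fin {n s : ℕ} [NeZero n] (hodd : n % 2 = 1) (hs : 2*s+2 ≤ n-1) :
    ¬ ∀ i, vtx n (n-1) s i = true := by
  intro h
  have hh := h ((0 : ℕ) : Fin n)
  rw [vtx_cast _ _ _ (Nat.pos_of_ne_zero (NeZero.ne n))] at hh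
  rw [vb_A (by omega)] at hh
  simp only [decide_eq_true_eq] at hh
  omega

-- ## initial step
lemma step_init {n : ℕ} [NeZero n] :
    murtyNext morris (fun _ => false) = vtx n 0 0 := by
  have hne : ¬ ∀ i : Fin n, (fun _ => false) i = true := by
    intro h
    exact absurd (h ⟨0, Nat.pos_of_ne_zero (NeZero.ne n)⟩) (by simp)
  have key : murtyNext morris (fun _ : Fin n => false)
      = cflip (fun _ => false) ((0 : ℕ) : Fin n) := by
    apply murtyNext_eq
    · apply morris_false _ hne _ 0
      · exact morrisRun_eq _ _ _ (Nat.pos_of_ne_zero (NeZero.ne n))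
          (fun k hk => absurd hk (by omega)) rfl
      · simp
    · intro i hi
      rw [Fin.lt_def, Fin.val_natCast, Nat.zero_mod] at hi
      omega
  rw [key]
  funext j
  unfold cflip
  by_cases hj : j = ((0 : ℕ) : Fin n)
  · rw [if_pos hj, hj]
    rw [show vtx n 0 0 ((0:ℕ) : Fin n) = vb 0 0 0 from
      vtx_cast _ _ _ (Nat.pos_of_ne_zero (NeZero.ne n))]
    rw [vb_A (by omega)]
    simp
  · rw [if_neg hj]
    have hjv : j.val ≠ 0 := by
      intro h
      exact hj (by rw [fin_eq_cast j, h])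
    show false = vb 0 0 j.val
    rw [vb_A (by omega)]
    symm
    rw [decide_eq_false_iff_not]
    omega

-- ## Case A, middle segments: 2s+2 ≤ m, m+1 < n, flip m-2s-2
lemma step_A_mid {n m s : ℕ} [NeZero n] (hmn : m+1 < n) (hs2 : 2*s+2 ≤ m) :
    murtyNext morris (vtx n m s) = vtx n m (s+1) := by
  have hA : 2*s ≤ m := by omega
  have hne : ¬ ∀ i, vtx n m s i = true := not_all_mid hmn (by omega)
  have key : murtyNext morris (vtx n m s) = cflip (vtx n m s) ((m-2*s-2 : ℕ) : Fin n) := by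
    apply murtyNext_eq
    · apply morris_false _ hne _ (2*s+2)
      · apply morrisRun_eq _ _ _ (by omega)
        · intro k hk
          rw [vtx_cast _ _ _ (by omega), vb_A hA]
          rw [decide_eq_true_eq]; omega
        · rw [vtx_cast _ _ _ (by omega), vb_A hA]
          rw [decide_eq_false_iff_not]; omega
      · rw [vtx_cast _ _ _ (by omega), vb_A hA]
        rw [decide_eq_decide]; omega
    · intro i hi
      rw [Fin.lt_def, Fin.val_natCast, Nat.mod_eq_of_lt (by omega)] at hi
      rw [fin_eq_cast i]
      by_cases hp : i.val % 2 = (m+1) % 2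
      · apply morris_true _ hne _ 0
        · apply morrisRun_eq _ _ _ (by omega)
          · intro k hk; omega
          · rw [vtx_cast _ _ _ (by omega), vb_A hA]
            rw [decide_eq_false_iff_not]; omega
        · rw [vtx_cast _ _ _ (by omega), vb_A hA]
          rw [ne_eq, decide_eq_decide]; omega
      · apply morris_true _ hne _ 1
        · apply morrisRun_eq _ _ _ (by omega)
          · intro k hk
            rw [vtx_cast _ _ _ (by omega), vb_A hA]
            rw [decide_eq_true_eq]; omega
          · rw [vtx_cast _ _ _ (by omega), vb_A hA]
            rw [decide_eq_false_iff_not]; omega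
        · rw [vtx_cast _ _ _ (by omega), vb_A hA]
          rw [ne_eq, decide_eq_decide]; omega
  rw [key]
  funext j
  unfold cflip
  by_cases hj : j = ((m-2*s-2 : ℕ) : Fin n)
  · rw [if_pos hj, hj]
    rw [show vtx n m s ((m-2*s-2:ℕ) : Fin n) = vb m s (m-2*s-2) from
        vtx_cast _ _ _ (by omega),
      show vtx n m (s+1) ((m-2*s-2:ℕ) : Fin n) = vb m (s+1) (m-2*s-2) from
        vtx_cast _ _ _ (by omega)]
    rw [vb_A hA, vb_A (show 2*(s+1) ≤ m by omega), ← decide_not, decide_eq_decide]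
    omega
  · rw [if_neg hj]
    have hjv : j.val ≠ m-2*s-2 := by
      intro h
      exact hj (by rw [fin_eq_cast j, h])
    show vb m s j.val = vb m (s+1) j.val
    rw [vb_A hA, vb_A (by omega), decide_eq_decide]
    omega

-- ## Case A, final segment m = n-1
lemma step_A_fin {n s : ℕ} [NeZero n] (hodd : n % 2 = 1) (hs2 : 2*s+2 ≤ n-1) :
    murtyNext morris (vtx n (n-1) s) = vtx n (n-1) (s+1) := by
  have hA : 2*s ≤ n-1 := by omega
  have hne : ¬ ∀ i, vtx n (n-1) s i = true := not_all_fin hodd hs2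
  have key : murtyNext morris (vtx n (n-1) s)
      = cflip (vtx n (n-1) s) ((n-1-2*s-2 : ℕ) : Fin n) := by
    apply murtyNext_eq
    · apply morris_false _ hne _ (2*s+2)
      · apply morrisRun_eq _ _ _ (by omega)
        · intro k hk
          rw [vtx_cast _ _ _ (by omega), vb_A hA]
          rw [decide_eq_true_eq]; omega
        · have he : n-1-2*s-2+1+(2*s+2) = n := by omega
          rw [vtx_cast_mod, he, Nat.mod_self, vb_A hA]
          rw [decide_eq_false_iff_not]; omega
      · rw [vtx_cast _ _ _ (by omega), vb_A hA]
        rw [decide_eq_decide]; omega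
    · intro i hi
      rw [Fin.lt_def, Fin.val_natCast, Nat.mod_eq_of_lt (by omega)] at hi
      rw [fin_eq_cast i]
      by_cases hp : i.val % 2 = n % 2
      · apply morris_true _ hne _ 0
        · apply morrisRun_eq _ _ _ (by omega)
          · intro k hk; omega
          · rw [vtx_cast _ _ _ (by omega), vb_A hA]
            rw [decide_eq_false_iff_not]; omega
        · rw [vtx_cast _ _ _ (by omega), vb_A hA]
          rw [ne_eq, decide_eq_decide]; omega
      · apply morris_true _ hne _ 1
        · apply morrisRun_eq _ _ _ (by omega)
          · intro k hk
            rw [vtx_cast _ _ _ (by omega), vb_A hA]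
            rw [decide_eq_true_eq]; omega
          · rw [vtx_cast _ _ _ (by omega), vb_A hA]
            rw [decide_eq_false_iff_not]; omega
        · rw [vtx_cast _ _ _ (by omega), vb_A hA]
          rw [ne_eq, decide_eq_decide]; omega
  rw [key]
  funext j
  unfold cflip
  by_cases hj : j = ((n-1-2*s-2 : ℕ) : Fin n)
  · rw [if_pos hj, hj]
    rw [show vtx n (n-1) s ((n-1-2*s-2:ℕ) : Fin n) = vb (n-1) s (n-1-2*s-2) from
        vtx_cast _ _ _ (by omega),
      show vtx n (n-1) (s+1) ((n-1-2*s-2:ℕ) : Fin n) = vb (n-1) (s+1) (n-1-2*s-2) from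
        vtx_cast _ _ _ (by omega)]
    rw [vb_A hA, vb_A (show 2*(s+1) ≤ n-1 by omega), ← decide_not, decide_eq_decide]
    omega
  · rw [if_neg hj]
    have hjv : j.val ≠ n-1-2*s-2 := by
      intro h
      exact hj (by rw [fin_eq_cast j, h])
    show vb (n-1) s j.val = vb (n-1) (s+1) j.val
    rw [vb_A hA, vb_A (by omega), decide_eq_decide]
    omega

-- ## block vertex, m even ≥ 2: flip index 1
lemma step_block_even {n m s : ℕ} [NeZero n] (hmn : m+1 < n) (h2s : 2*s = m)
    (hm2 : 2 ≤ m) :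
    murtyNext morris (vtx n m s) = vtx n m (s+1) := by
  have hA : 2*s ≤ m := by omega
  have hB : ¬ 2*(s+1) ≤ m := by omega
  have hne : ¬ ∀ i, vtx n m s i = true := not_all_mid hmn (by omega)
  have key : murtyNext morris (vtx n m s) = cflip (vtx n m s) ((1 : ℕ) : Fin n) := by
    apply murtyNext_eq
    · apply morris_false _ hne _ (m-1)
      · apply morrisRun_eq _ _ _ (by omega)
        · intro k hk
          rw [vtx_cast _ _ _ (by omega), vb_A hA]
          rw [decide_eq_true_eq]; omega
        · rw [vtx_cast _ _ _ (by omega), vb_A hA]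
          rw [decide_eq_false_iff_not]; omega
      · rw [vtx_cast _ _ _ (by omega), vb_A hA]
        rw [decide_eq_decide]; omega
    · intro i hi
      rw [Fin.lt_def, Fin.val_natCast, Nat.mod_eq_of_lt (by omega)] at hi
      rw [fin_eq_cast i]
      apply morris_true _ hne _ m
      · apply morrisRun_eq _ _ _ (by omega)
        · intro k hk
          rw [vtx_cast _ _ _ (by omega), vb_A hA]
          rw [decide_eq_true_eq]; omega
        · rw [vtx_cast _ _ _ (by omega), vb_A hA]
          rw [decide_eq_false_iff_not]; omega
      · rw [vtx_cast _ _ _ (by omega), vb_A hA]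
        rw [ne_eq, decide_eq_decide]; omega
  rw [key]
  funext j
  unfold cflip
  by_cases hj : j = ((1 : ℕ) : Fin n)
  · rw [if_pos hj, hj]
    rw [show vtx n m s ((1:ℕ) : Fin n) = vb m s 1 from vtx_cast _ _ _ (by omega),
      show vtx n m (s+1) ((1:ℕ) : Fin n) = vb m (s+1) 1 from vtx_cast _ _ _ (by omega)]
    rw [vb_A hA, vb_B hB, ← decide_not, decide_eq_decide]
    omega
  · rw [if_neg hj]
    have hjv : j.val ≠ 1 := by
      intro h
      exact hj (by rw [fin_eq_cast j, h])
    show vb m s j.val = vb m (s+1) j.val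
    rw [vb_A hA, vb_B hB, decide_eq_decide]
    omega

-- ## block vertex, m odd: flip index 0
lemma step_block_odd {n m s : ℕ} [NeZero n] (hmn : m+1 < n) (h2s : 2*s + 1 = m) :
    murtyNext morris (vtx n m s) = vtx n m (s+1) := by
  have hA : 2*s ≤ m := by omega
  have hB : ¬ 2*(s+1) ≤ m := by omega
  have hne : ¬ ∀ i, vtx n m s i = true := not_all_mid hmn (by omega)
  have key : murtyNext morris (vtx n m s) = cflip (vtx n m s) ((0 : ℕ) : Fin n) := by
    apply murtyNext_eq
    · apply morris_false _ hne _ m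
      · apply morrisRun_eq _ _ _ (by omega)
        · intro k hk
          rw [vtx_cast _ _ _ (by omega), vb_A hA]
          rw [decide_eq_true_eq]; omega
        · rw [vtx_cast _ _ _ (by omega), vb_A hA]
          rw [decide_eq_false_iff_not]; omega
      · rw [vtx_cast _ _ _ (by omega), vb_A hA]
        rw [decide_eq_decide]; omega
    · intro i hi
      rw [Fin.lt_def, Fin.val_natCast, Nat.zero_mod] at hi
      omega
  rw [key]
  funext j
  unfold cflip
  by_cases hj : j = ((0 : ℕ) : Fin n)
  · rw [if_pos hj, hj]
    rw [show vtx n m s ((0:ℕ) : Fin n) = vb m s 0 from vtx_cast _ _ _ (by omega),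
      show vtx n m (s+1) ((0:ℕ) : Fin n) = vb m (s+1) 0 from vtx_cast _ _ _ (by omega)]
    rw [vb_A hA, vb_B hB, ← decide_not, decide_eq_decide]
    omega
  · rw [if_neg hj]
    have hjv : j.val ≠ 0 := by
      intro h
      exact hj (by rw [fin_eq_cast j, h])
    show vb m s j.val = vb m (s+1) j.val
    rw [vb_A hA, vb_B hB, decide_eq_decide]
    omega

-- ## Case B middle: m < 2s, s < m, flip 2s-m+1
lemma step_B_mid {n m s : ℕ} [NeZero n] (hmn : m+1 < n) (hB : m < 2*s) (hsm : s < m) :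
    murtyNext morris (vtx n m s) = vtx n m (s+1) := by
  have hBA : ¬ 2*s ≤ m := by omega
  have hne : ¬ ∀ i, vtx n m s i = true := not_all_mid hmn (by omega)
  have key : murtyNext morris (vtx n m s)
      = cflip (vtx n m s) ((2*s-m+1 : ℕ) : Fin n) := by
    apply murtyNext_eq
    · apply morris_false _ hne _ (m-(2*s-m)-1)
      · apply morrisRun_eq _ _ _ (by omega)
        · intro k hk
          rw [vtx_cast _ _ _ (by omega), vb_B hBA]
          rw [decide_eq_true_eq]; omega
        · rw [vtx_cast _ _ _ (by omega), vb_B hBA]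
          rw [decide_eq_false_iff_not]; omega
      · rw [vtx_cast _ _ _ (by omega), vb_B hBA]
        rw [decide_eq_decide]; omega
    · intro i hi
      rw [Fin.lt_def, Fin.val_natCast, Nat.mod_eq_of_lt (by omega)] at hi
      rw [fin_eq_cast i]
      by_cases hxc : i.val = 2*s-m
      · apply morris_true _ hne _ (m-(2*s-m))
        · apply morrisRun_eq _ _ _ (by omega)
          · intro k hk
            rw [vtx_cast _ _ _ (by omega), vb_B hBA]
            rw [decide_eq_true_eq]; omega
          · rw [vtx_cast _ _ _ (by omega), vb_B hBA]
            rw [decide_eq_false_iff_not]; omega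
        · rw [vtx_cast _ _ _ (by omega), vb_B hBA]
          rw [ne_eq, decide_eq_decide]; omega
      · by_cases hp : i.val % 2 = m % 2
        · apply morris_true _ hne _ 0
          · apply morrisRun_eq _ _ _ (by omega)
            · intro k hk; omega
            · rw [vtx_cast _ _ _ (by omega), vb_B hBA]
              rw [decide_eq_false_iff_not]; omega
          · rw [vtx_cast _ _ _ (by omega), vb_B hBA]
            rw [ne_eq, decide_eq_decide]; omega
        · by_cases hxc1 : i.val + 1 = 2*s - m
          · apply morris_true _ hne _ (m-(2*s-m)+1)
            · apply morrisRun_eq _ _ _ (by omega)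
              · intro k hk
                rw [vtx_cast _ _ _ (by omega), vb_B hBA]
                rw [decide_eq_true_eq]; omega
              · rw [vtx_cast _ _ _ (by omega), vb_B hBA]
                rw [decide_eq_false_iff_not]; omega
            · rw [vtx_cast _ _ _ (by omega), vb_B hBA]
              rw [ne_eq, decide_eq_decide]; omega
          · apply morris_true _ hne _ 1
            · apply morrisRun_eq _ _ _ (by omega)
              · intro k hk
                rw [vtx_cast _ _ _ (by omega), vb_B hBA]
                rw [decide_eq_true_eq]; omega
              · rw [vtx_cast _ _ _ (by omega), vb_B hBA]
                rw [decide_eq_false_iff_not]; omega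
            · rw [vtx_cast _ _ _ (by omega), vb_B hBA]
              rw [ne_eq, decide_eq_decide]; omega
  rw [key]
  funext j
  unfold cflip
  by_cases hj : j = ((2*s-m+1 : ℕ) : Fin n)
  · rw [if_pos hj, hj]
    rw [show vtx n m s ((2*s-m+1:ℕ) : Fin n) = vb m s (2*s-m+1) from
        vtx_cast _ _ _ (by omega),
      show vtx n m (s+1) ((2*s-m+1:ℕ) : Fin n) = vb m (s+1) (2*s-m+1) from
        vtx_cast _ _ _ (by omega)]
    rw [vb_B hBA, vb_B (show ¬2*(s+1) ≤ m by omega), ← decide_not, decide_eq_decide]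
    omega
  · rw [if_neg hj]
    have hjv : j.val ≠ 2*s-m+1 := by
      intro h
      exact hj (by rw [fin_eq_cast j, h])
    show vb m s j.val = vb m (s+1) j.val
    rw [vb_B hBA, vb_B (by omega), decide_eq_decide]
    omega

-- ## Case B top: s = m, flip m+1, segment transition
lemma vb_mm {m x : ℕ} : vb m m x = decide ((x < m ∧ x % 2 = m % 2) ∨ x = m) := by
  unfold vb
  split <;> (rw [decide_eq_decide]; omega)

lemma step_B_top {n m : ℕ} [NeZero n] (hmn : m+1 < n) (hodd : n % 2 = 1) :
    murtyNext morris (vtx n m m) = vtx n (m+1) 0 := by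
  have hne : ¬ ∀ i, vtx n m m i = true := not_all_mid hmn (le_refl m)
  have key : murtyNext morris (vtx n m m)
      = cflip (vtx n m m) ((m+1 : ℕ) : Fin n) := by
    apply murtyNext_eq
    · apply morris_false _ hne _ 0
      · apply morrisRun_eq _ _ _ (by omega)
        · intro k hk; omega
        · by_cases hw : m+1+1+0 < n
          · rw [vtx_cast _ _ _ hw, vb_mm]
            rw [decide_eq_false_iff_not]; omega
          · have he : m+1+1+0 = n := by omega
            rw [vtx_cast_mod, he, Nat.mod_self, vb_mm]
            rw [decide_eq_false_iff_not]; omega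
      · rw [vtx_cast _ _ _ (by omega), vb_mm]
        rw [decide_eq_decide]; omega
    · intro i hi
      rw [Fin.lt_def, Fin.val_natCast, Nat.mod_eq_of_lt (by omega)] at hi
      rw [fin_eq_cast i]
      by_cases hp : i.val % 2 = m % 2
      · apply morris_true _ hne _ 0
        · apply morrisRun_eq _ _ _ (by omega)
          · intro k hk; omega
          · rw [vtx_cast _ _ _ (by omega), vb_mm]
            rw [decide_eq_false_iff_not]; omega
        · rw [vtx_cast _ _ _ (by omega), vb_mm]
          rw [ne_eq, decide_eq_decide]; omega
      · apply morris_true _ hne _ 1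
        · apply morrisRun_eq _ _ _ (by omega)
          · intro k hk
            rw [vtx_cast _ _ _ (by omega), vb_mm]
            rw [decide_eq_true_eq]; omega
          · rw [vtx_cast _ _ _ (by omega), vb_mm]
            rw [decide_eq_false_iff_not]; omega
        · rw [vtx_cast _ _ _ (by omega), vb_mm]
          rw [ne_eq, decide_eq_decide]; omega
  rw [key]
  funext j
  unfold cflip
  by_cases hj : j = ((m+1 : ℕ) : Fin n)
  · rw [if_pos hj, hj]
    rw [show vtx n m m ((m+1:ℕ) : Fin n) = vb m m (m+1) from vtx_cast _ _ _ (by omega),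
      show vtx n (m+1) 0 ((m+1:ℕ) : Fin n) = vb (m+1) 0 (m+1) from vtx_cast _ _ _ (by omega)]
    rw [vb_mm, vb_A (show 2*0 ≤ m+1 by omega), ← decide_not, decide_eq_decide]
    omega
  · rw [if_neg hj]
    have hjv : j.val ≠ m+1 := by
      intro h
      exact hj (by rw [fin_eq_cast j, h])
    show vb m m j.val = vb (m+1) 0 j.val
    rw [vb_mm, vb_A (by omega), decide_eq_decide]
    omega

-- ## combined in-segment step
lemma step_seg {n m s : ℕ} [NeZero n] (hmn : m+1 < n) (hs : s < m) :
    murtyNext morris (vtx n m s) = vtx n m (s+1) := by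
  by_cases h1 : 2*s+2 ≤ m
  · exact step_A_mid hmn h1
  · by_cases h2 : 2*s = m
    · exact step_block_even hmn h2 (by omega)
    · by_cases h3 : 2*s+1 = m
      · exact step_block_odd hmn h3
      · exact step_B_mid hmn (by omega) hs

lemma iter_seg {n m : ℕ} [NeZero n] (hmn : m+1 < n) :
    ∀ s, s ≤ m → (murtyNext morris)^[s] (vtx n m 0) = vtx n m s := by
  intro s
  induction s with
  | zero => intro _; rfl
  | succ k ih =>
    intro hk
    rw [Function.iterate_succ_apply', ih (by omega), step_seg hmn (by omega)]

lemma seg_full {n m : ℕ} [NeZero n] (hmn : m+1 < n) (hodd : n % 2 = 1) :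
    (murtyNext morris)^[m+1] (vtx n m 0) = vtx n (m+1) 0 := by
  rw [Function.iterate_succ_apply', iter_seg hmn m (le_refl m), step_B_top hmn hodd]

lemma triangle (m : ℕ) : (m+1)*((m+1)+1)/2 = m*(m+1)/2 + (m+1) := by
  obtain ⟨c, hc⟩ := Nat.even_mul_succ_self m
  have h2 : (m+1)*((m+1)+1) = m*(m+1) + 2*(m+1) := by ring
  omega

lemma reach_seg {n : ℕ} [NeZero n] (hodd : n % 2 = 1) :
    ∀ m, m < n → (murtyNext morris)^[1 + m*(m+1)/2] (fun _ => false) = vtx n m 0 := by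
  intro m
  induction m with
  | zero =>
    intro _
    have : (1 : ℕ) + 0*(0+1)/2 = 1 := by omega
    rw [this, Function.iterate_one, step_init]
  | succ k ih =>
    intro hk
    have harith : 1 + (k+1)*((k+1)+1)/2 = (k+1) + (1 + k*(k+1)/2) := by
      have := triangle k
      omega
    rw [harith, Function.iterate_add_apply, ih (by omega), seg_full (by omega) hodd]

lemma reach_final_seg {n : ℕ} [NeZero n] (hodd : n % 2 = 1) :
    ∀ s, 2*s ≤ n-1 →
      (murtyNext morris)^[s] (vtx n (n-1) 0) = vtx n (n-1) s := by
  intro s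
  induction s with
  | zero => intro _; rfl
  | succ k ih =>
    intro hk
    rw [Function.iterate_succ_apply', ih (by omega), step_A_fin hodd (by omega)]

lemma sink_eq {n : ℕ} [NeZero n] (hodd : n % 2 = 1) :
    vtx n (n-1) ((n-1)/2) = fun _ : Fin n => true := by
  funext j
  show vb (n-1) ((n-1)/2) j.val = true
  have hj := j.isLt
  rw [vb_A (by omega), decide_eq_true_eq]
  omega

lemma decomp : ∀ t : ℕ, 1 ≤ t → ∃ m s, s ≤ m ∧ t = 1 + m*(m+1)/2 + s := by
  intro t
  induction t with
  | zero => omega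
  | succ k ih =>
    intro _
    by_cases hk : 1 ≤ k
    · obtain ⟨m, s, hs, hkeq⟩ := ih hk
      by_cases hsm : s < m
      · exact ⟨m, s+1, by omega, by omega⟩
      · refine ⟨m+1, 0, by omega, ?_⟩
        have := triangle m
        omega
    · refine ⟨0, 0, le_refl 0, by omega⟩

theorem morris_murty_from_zero {n : ℕ} [NeZero n] (hn : Odd n) :
    ((murtyNext (morris))^[(n ^ 2 + 1) / 2] (fun _ => false) = fun _ : Fin n => true) ∧
      ∀ N < (n ^ 2 + 1) / 2,
        (murtyNext (morris))^[N] (fun _ => false) ≠ fun _ : Fin n => true := by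

  have hodd : n % 2 = 1 := Nat.odd_iff.mp hn
  have hn1 : 1 ≤ n := Nat.pos_of_ne_zero (NeZero.ne n)
  obtain ⟨p, hp⟩ := hn
  have h1 : n^2 = 2*(2*p*p+2*p)+1 := by subst hp; ring
  have h2 : (n-1)*((n-1)+1) = 2*(2*p*p+p) := by
    subst hp
    rw [Nat.add_sub_cancel]
    ring
  constructor
  · have hsplit : (n^2+1)/2 = (n-1)/2 + (1 + (n-1)*((n-1)+1)/2) := by omega
    rw [hsplit, Function.iterate_add_apply, reach_seg hodd (n-1) (by omega),
      reach_final_seg hodd ((n-1)/2) (by omega), sink_eq hodd]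
  · intro N hN
    by_cases h0 : N = 0
    · subst h0
      simp only [Function.iterate_zero, id]
      intro h
      have := congrFun h ⟨0, by omega⟩
      simp at this
    · obtain ⟨m, s, hs, hNe⟩ := decomp N (by omega)
      have hmlt : m < n := by
        by_contra hh
        push_neg at hh
        have hmul : n*(n+1) ≤ m*(m+1) := Nat.mul_le_mul hh (by omega)
        have hdiv : n*(n+1)/2 ≤ m*(m+1)/2 := Nat.div_le_div_right hmul
        have h3 : n*(n+1) = 2*(2*p*p+3*p+1) := by subst hp; ring
        omega
      rw [show N = s + (1 + m*(m+1)/2) from by omega, Function.iterate_add_apply,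
        reach_seg hodd m hmlt]
      by_cases hmn1 : m + 1 < n
      · rw [iter_seg hmn1 s hs]
        intro h
        exact not_all_mid hmn1 hs (fun i => congrFun h i)
      · have hm : m = n-1 := by omega
        subst hm
        have hs2 : 2*s + 2 ≤ n-1 := by omega
        rw [reach_final_seg hodd s (by omega)]
        intro h
        exact not_all_fin hodd hs2 (fun i => congrFun h i)
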